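/- For fixed real numbers m < M and x₃ with m < x₃ ≤ M, the function s(a) = [(1-2a(M-x₃))/(1-2a(M-m))]² · (1-4a(M-m))/(1-4a(M-x₃)) is strictly decreasing on the interval [0, 1/(4(M-m))), with s(0) = 1 and s(a) → 0 as a → 1/(4(M-m)). -/

import Mathlib

open Filter Set Topology

/-- For fixed m < M and x₃ ∈ (m, M], the function
s(a) = ((1-2a(M-x₃))/(1-2a(M-m)))² · (1-4a(M-m))/(1-4a(M-x₃))
is strictly decreasing on [0, 1/(4(M-m))), with s(0) = 1 and s(a) → 0 as a → 1/(4(M-m))⁻. -/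
theorem stmt0 (m M x₃ : ℝ) (hmM : m < M) (hx₃m : m < x₃) (hx₃M : x₃ ≤ M)
    (s : ℝ → ℝ)
    (hs : ∀ a, s a = ((1 - 2*a*(M - x₃)) / (1 - 2*a*(M - m)))^2 *
      ((1 - 4*a*(M - m)) / (1 - 4*a*(M - x₃)))) :
    StrictAntiOn s (Set.Ico 0 (1/(4*(M - m)))) ∧
    s 0 = 1 ∧
    Tendsto s (nhdsWithin (1/(4*(M - m))) (Set.Iio (1/(4*(M - m))))) (nhds 0) := by
  set c := M - m with hcdef
  set d := M - x₃ with hddef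
  have hc : 0 < c := sub_pos.mpr hmM
  have hd0 : 0 ≤ d := sub_nonneg.mpr hx₃M
  have hdc : d < c := sub_lt_sub_left hx₃m M
  set L := 1/(4*c) with hLdef
  have hL4 : 4*L*c = 1 := by rw [hLdef]; field_simp [hc.ne']
  have hL0 : 0 ≤ L := by positivity
  rw [show s = fun a => ((1 - 2*a*d) / (1 - 2*a*c))^2 *
      ((1 - 4*a*c) / (1 - 4*a*d)) from funext hs]
  set F : ℝ → ℝ := fun a => ((1 - 2*a*d) / (1 - 2*a*c))^2 *
      ((1 - 4*a*c) / (1 - 4*a*d)) with hF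
  -- positivity of denominators on [0, L]
  have key : ∀ a : ℝ, 0 ≤ a → 4*a*c ≤ 1 →
      0 < 1 - 2*a*c ∧ 0 < 1 - 4*a*d ∧ 0 < 1 - 2*a*d := by
    intro a ha h4
    have hac : 0 ≤ a*c := mul_nonneg ha hc.le
    have hq : 0 < 1 - 4*a*d := by
      nlinarith [mul_nonneg hd0 (by linarith : (0:ℝ) ≤ 1 - 4*a*c)]
    have had : 0 ≤ a*d := mul_nonneg ha hd0
    exact ⟨by nlinarith, hq, by nlinarith⟩
  have hmem : ∀ a ∈ Set.Icc (0:ℝ) L, 0 ≤ a ∧ 4*a*c ≤ 1 := by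
    intro a ha
    have h := (le_div_iff₀ (by positivity : (0:ℝ) < 4*c)).mp (ha.2)
    exact ⟨ha.1, by linarith⟩
  -- continuity at each point of [0, L]
  have hca : ∀ a ∈ Set.Icc (0:ℝ) L, ContinuousAt F a := by
    intro a ha
    obtain ⟨ha0, h4⟩ := hmem a ha
    obtain ⟨hv, hq, hu⟩ := key a ha0 h4
    have c1 : ContinuousAt (fun x : ℝ => 1 - 2*x*d) a := by fun_prop
    have c2 : ContinuousAt (fun x : ℝ => 1 - 2*x*c) a := by fun_prop
    have c3 : ContinuousAt (fun x : ℝ => 1 - 4*x*c) a := by fun_prop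
    have c4 : ContinuousAt (fun x : ℝ => 1 - 4*x*d) a := by fun_prop
    exact ((c1.div c2 hv.ne').pow 2).mul (c3.div c4 hq.ne')
  -- derivative is negative on the interior
  have hderiv : ∀ a ∈ Set.Ioo (0:ℝ) L, deriv F a < 0 := by
    intro a ha
    have ha0 : 0 < a := ha.1
    have h4 : 4*a*c < 1 := by
      have h := (lt_div_iff₀ (by positivity : (0:ℝ) < 4*c)).mp ha.2
      linarith
    obtain ⟨hv, hq, hu⟩ := key a ha0.le h4.le
    have h1 : HasDerivAt (fun x : ℝ => 1 - 2*x*d) (-(2*1*d)) a :=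
      ((((hasDerivAt_id a).const_mul 2).mul_const d).const_sub 1)
    have h2 : HasDerivAt (fun x : ℝ => 1 - 2*x*c) (-(2*1*c)) a :=
      ((((hasDerivAt_id a).const_mul 2).mul_const c).const_sub 1)
    have h3 : HasDerivAt (fun x : ℝ => 1 - 4*x*c) (-(4*1*c)) a :=
      ((((hasDerivAt_id a).const_mul 4).mul_const c).const_sub 1)
    have h4' : HasDerivAt (fun x : ℝ => 1 - 4*x*d) (-(4*1*d)) a :=
      ((((hasDerivAt_id a).const_mul 4).mul_const d).const_sub 1)
    have hf := (h1.div h2 hv.ne').pow 2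
    have hg := h3.div h4' hq.ne'
    have hFd := hf.mul hg
    have hFd' : HasDerivAt F _ a := hFd
    rw [hFd'.deriv]
    have heq : (↑2 * ((1 - 2*a*d) / (1 - 2*a*c)) ^ (2-1) *
          ((-(2*1*d) * (1 - 2*a*c) - (1 - 2*a*d) * -(2*1*c)) / (1 - 2*a*c)^2)) *
          ((1 - 4*a*c) / (1 - 4*a*d)) +
        ((1 - 2*a*d) / (1 - 2*a*c))^2 *
          ((-(4*1*c) * (1 - 4*a*d) - (1 - 4*a*c) * -(4*1*d)) / (1 - 4*a*d)^2)
        = (-8*a*(c-d)*(1 - 2*a*d)*((c+d) - 6*a*c*d)) /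
            ((1 - 2*a*c)^3 * (1 - 4*a*d)^2) := by
      norm_num
      field_simp [hv.ne', hq.ne']
      ring
    have hK : 0 < (c+d) - 6*a*c*d := by
      nlinarith [mul_nonneg hd0 (by linarith : (0:ℝ) ≤ 1 - 4*a*c)]
    calc _ = (-8*a*(c-d)*(1 - 2*a*d)*((c+d) - 6*a*c*d)) /
            ((1 - 2*a*c)^3 * (1 - 4*a*d)^2) := heq
      _ < 0 := by
          apply div_neg_of_neg_of_pos
          · have : 0 < 8*a*(c-d)*(1 - 2*a*d)*((c+d) - 6*a*c*d) :=
              mul_pos (mul_pos (mul_pos (by linarith) (by linarith)) hu) hK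
            nlinarith [this]
          · positivity
  refine ⟨?_, ?_, ?_⟩
  · have hIco : Set.Ico (0:ℝ) L ⊆ Set.Icc 0 L := Set.Ico_subset_Icc_self
    refine strictAntiOn_of_deriv_neg (convex_Ico 0 L)
      (fun a ha => (hca a (hIco ha)).continuousWithinAt) ?_
    rw [interior_Ico]
    exact hderiv
  · simp [hF]
  · have hFL : F L = 0 := by
      have : 1 - 4*L*c = 0 := by rw [hL4]; ring
      simp [hF, this]
    have := ((hca L ⟨hL0, le_refl L⟩).tendsto).mono_left
      (nhdsWithin_le_nhds (s := Set.Iio L))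
    rwa [hFL] at this
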